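/- Let L be a squarefree positive integer and L' a divisor of L such that L/L' has at most D prime factors (counted with multiplicity). Then for any real y ≥ 1, the number of divisors d of L' with 1 ≤ d ≤ y is at least 2^{-D} times the number of divisors d of L with 1 ≤ d ≤ y. -/

import Mathlib

theorem stmt_3 (L L' D : ℕ) (hL : Squarefree L) (hL' : L' ∣ L) (hL'pos : 0 < L')
    (hD : (L / L').primeFactorsList.length ≤ D) (y : ℝ) (hy : 1 ≤ y) :
    ((L.divisors.filter (fun d : ℕ => (d : ℝ) ≤ y)).card : ℝ) * (2 : ℝ) ^ (-(D : ℤ)) ≤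
      ((L'.divisors.filter (fun d : ℕ => (d : ℝ) ≤ y)).card : ℝ) := by
  have hLne : L ≠ 0 := hL.ne_zero
  set m := L / L' with hm
  have hLm : L' * m = L := Nat.mul_div_cancel' hL'
  have hmdvd : m ∣ L := Nat.div_dvd_of_dvd hL'
  have hmne : m ≠ 0 := by
    intro h; rw [h, mul_zero] at hLm; exact hLne hLm.symm
  have hmsq : Squarefree m := hL.squarefree_of_dvd hmdvd
  have hcop : Nat.Coprime L' m := by
    rw [← hLm] at hL
    exact Nat.Coprime.coprime_dvd_left dvd_rfl
      ((Nat.squarefree_mul_iff.mp hL).1)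
  -- bound on number of divisors of m
  have hdivm : m.divisors.card ≤ 2 ^ D := by
    have h1 : m.divisors.card = 2 ^ m.primeFactors.card := by
      rw [Nat.card_divisors hmne, Finset.prod_congr rfl
        (fun p hp => by
          rw [Nat.factorization_eq_one_of_squarefree hmsq
            (Nat.prime_of_mem_primeFactors hp) (Nat.dvd_of_mem_primeFactors hp)]),
        Finset.prod_const]
    have h2 : m.primeFactors.card ≤ m.primeFactorsList.length := by
      rw [← Nat.toFinset_factors]; exact m.primeFactorsList.toFinset_card_le
    rw [h1]
    exact Nat.pow_le_pow_right (by norm_num) (h2.trans hD)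
  set A := L.divisors.filter (fun d : ℕ => (d : ℝ) ≤ y) with hA
  set B := L'.divisors.filter (fun d : ℕ => (d : ℝ) ≤ y) with hB
  have key : A.card ≤ 2 ^ D * B.card := by
    have himg : A.image (fun d => Nat.gcd d L') ⊆ B := by
      intro b hb
      obtain ⟨d, hd, rfl⟩ := Finset.mem_image.mp hb
      rw [hA, Finset.mem_filter, Nat.mem_divisors] at hd
      rw [hB, Finset.mem_filter, Nat.mem_divisors]
      refine ⟨⟨Nat.gcd_dvd_right _ _, hL'pos.ne'⟩, ?_⟩
      have hdpos : 0 < d := Nat.pos_of_mem_divisors (Nat.mem_divisors.mpr hd.1)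
      have : Nat.gcd d L' ≤ d := Nat.le_of_dvd hdpos (Nat.gcd_dvd_left _ _)
      exact le_trans (Nat.cast_le.mpr this) hd.2
    calc A.card ≤ 2 ^ D * (A.image (fun d => Nat.gcd d L')).card := by
          apply Finset.card_le_mul_card_image
          intro b hb
          -- fiber over b injects into divisors of m
          have hbpos : 0 < b := by
            obtain ⟨d, hd, rfl⟩ := Finset.mem_image.mp hb
            exact Nat.gcd_pos_of_pos_right _ hL'pos
          have : (A.filter (fun x => Nat.gcd x L' = b)).card ≤ m.divisors.card := by
            apply Finset.card_le_card_of_injOn (fun d => d / b)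
            · intro d hd
              rw [Finset.mem_coe, Finset.mem_filter] at hd
              obtain ⟨hdA, hgcd⟩ := hd
              rw [hA, Finset.mem_filter, Nat.mem_divisors] at hdA
              have hdL : d ∣ L := hdA.1.1
              rw [← hLm] at hdL
              obtain ⟨d₁, d₂, hd₁, hd₂, hdd⟩ := exists_dvd_and_dvd_of_dvd_mul hdL
              have hcop₁ : Nat.Coprime d₁ d₂ :=
                Nat.Coprime.coprime_dvd_left hd₁ (Nat.Coprime.coprime_dvd_right hd₂ hcop)
              have hd₁b : d₁ = b := by
                apply Nat.dvd_antisymm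
                · exact Nat.dvd_gcd (hdd ▸ Dvd.intro _ rfl) hd₁ |>.trans (hgcd ▸ dvd_rfl)
                · have hbd : b ∣ d₁ * d₂ := hgcd ▸ hdd ▸ Nat.gcd_dvd_left _ _
                  have : Nat.Coprime b d₂ := Nat.Coprime.coprime_dvd_left
                    (hgcd ▸ Nat.gcd_dvd_right d L') (Nat.Coprime.coprime_dvd_right hd₂ hcop)
                  exact (Nat.Coprime.dvd_of_dvd_mul_right this hbd)
              rw [Finset.mem_coe, Nat.mem_divisors]
              refine ⟨?_, hmne⟩
              show d / b ∣ m
              rw [hdd, hd₁b, Nat.mul_div_cancel_left _ hbpos]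
              exact hd₂
            · intro d hd d' hd' hdd'
              rw [Finset.coe_filter] at hd hd'
              have hbd : b ∣ d := hd.2 ▸ Nat.gcd_dvd_left _ _
              have hbd' : b ∣ d' := hd'.2 ▸ Nat.gcd_dvd_left _ _
              rw [← Nat.div_mul_cancel hbd, ← Nat.div_mul_cancel hbd']
              exact congrArg (· * b) hdd'
          calc (A.filter (fun x => Nat.gcd x L' = b)).card ≤ m.divisors.card := this
            _ ≤ 2 ^ D := hdivm
      _ ≤ 2 ^ D * B.card := Nat.mul_le_mul_left _ (Finset.card_le_card himg)
  have keyR : (A.card : ℝ) ≤ 2 ^ D * B.card := by exact_mod_cast key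
  rw [zpow_neg, zpow_natCast]
  rw [mul_inv_le_iff₀ (by positivity)]
  linarith [keyR]
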